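/- Let p be a prime. For every k with 1 ≤ k ≤ p-1, the Gaussian q-binomial coefficient satisfies binom_q(p−1+k, k) ≡ ([p]_q/[k]_q) · (1 + [p]_q · ∑_{j=1}^{k-1} q^j/[j]_q) (mod [p]_q^3). -/

import Mathlib

open Polynomial Finset

noncomputable section

/-- The `q`-integer `[n]_q = 1 + q + ⋯ + q^(n-1)`, as a polynomial in `ℚ[q]`. -/
def qIntP (n : ℕ) : Polynomial ℚ := ∑ i ∈ Finset.range n, X ^ i

/-- The `q`-integer `[n]_q` viewed in the field of rational functions `ℚ(q)`. -/
def qN (n : ℕ) : RatFunc ℚ := algebraMap (Polynomial ℚ) (RatFunc ℚ) (qIntP n)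

/-- The `q`-Pochhammer symbol `(q; q)_n = ∏_{j=1}^{n} (1 - q^j)` in `ℚ(q)`. -/
def qqPoch (n : ℕ) : RatFunc ℚ :=
  algebraMap (Polynomial ℚ) (RatFunc ℚ) (∏ j ∈ Finset.range n, (1 - X ^ (j + 1)))

/-- The `q`-Pochhammer symbol `(-q; q)_n = ∏_{j=1}^{n} (1 + q^j)` in `ℚ(q)`. -/
def nqPoch (n : ℕ) : RatFunc ℚ :=
  algebraMap (Polynomial ℚ) (RatFunc ℚ) (∏ j ∈ Finset.range n, (1 + X ^ (j + 1)))

/-- The Gaussian `q`-binomial coefficient, as a rational function. -/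
def qbin (n k : ℕ) : RatFunc ℚ :=
  if k ≤ n then qqPoch n / (qqPoch k * qqPoch (n - k)) else 0

/-- `qCong p r x y` means `x ≡ y (mod [p]_q^r)`: the difference `x - y` can be
written as a fraction whose numerator (a polynomial) is divisible by `[p]_q^r`
and whose denominator is relatively prime to `[p]_q`. -/
def qCong (p r : ℕ) (x y : RatFunc ℚ) : Prop :=
  ∃ a b : Polynomial ℚ, IsCoprime b (qIntP p) ∧
    (x - y) * algebraMap (Polynomial ℚ) (RatFunc ℚ) b =
      algebraMap (Polynomial ℚ) (RatFunc ℚ) (qIntP p ^ r * a)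

lemma prod_add_sq {R : Type*} [CommRing R] (s : Finset ℕ) (a b : ℕ → R) (m : R) :
    ∃ c, ∏ i ∈ s, (a i + m * b i) =
      ∏ i ∈ s, a i + m * ∑ j ∈ s, b j * ∏ i ∈ s.erase j, a i + m ^ 2 * c := by
  classical
  induction s using Finset.induction_on with
  | empty => exact ⟨0, by simp⟩
  | @insert x s hx ih =>
    obtain ⟨c, hc⟩ := ih
    refine ⟨b x * (∑ j ∈ s, b j * ∏ i ∈ s.erase j, a i) + (a x + m * b x) * c, ?_⟩
    rw [Finset.prod_insert hx, Finset.prod_insert hx, Finset.sum_insert hx,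
      Finset.erase_insert hx]
    have hsum : ∑ j ∈ s, b j * ∏ i ∈ (insert x s).erase j, a i
        = a x * ∑ j ∈ s, b j * ∏ i ∈ s.erase j, a i := by
      rw [Finset.mul_sum]
      refine Finset.sum_congr rfl fun j hj => ?_
      have hjx : x ≠ j := fun h => hx (h ▸ hj)
      rw [Finset.erase_insert_of_ne hjx,
        Finset.prod_insert (fun h => hx (Finset.mem_of_mem_erase h))]
      ring
    rw [hsum, hc]
    ring

lemma qIntP_mul (n : ℕ) : (1 - X) * qIntP n = 1 - X ^ n := by
  have := geom_sum_mul (X : Polynomial ℚ) n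
  unfold qIntP
  linear_combination -this

lemma qIntP_add (m n : ℕ) : qIntP (m + n) = qIntP m + X ^ m * qIntP n := by
  unfold qIntP
  rw [Finset.sum_range_add, Finset.mul_sum]
  simp [pow_add]

lemma qIntP_ne_zero {n : ℕ} (h : n ≠ 0) : qIntP n ≠ 0 := by
  intro h0
  apply h
  have := congrArg (eval 1) h0
  simp [qIntP, eval_finset_sum] at this
  exact_mod_cast this

lemma one_sub_X_pow_ne_zero {n : ℕ} (h : 1 ≤ n) : (1 : Polynomial ℚ) - X ^ n ≠ 0 := by
  have e2 : (1 : Polynomial ℚ) - X ^ n = -(X ^ n - C 1) := by rw [map_one]; ring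
  have h2 : natDegree ((1 : Polynomial ℚ) - X ^ n) = n := by
    rw [e2, natDegree_neg, natDegree_X_pow_sub_C]
  intro h0
  rw [h0, natDegree_zero] at h2
  omega

lemma qIntP_natDegree {n : ℕ} (h : 1 ≤ n) : (qIntP n).natDegree = n - 1 := by
  have e1 : (1 : Polynomial ℚ) - X = -(X - C 1) := by rw [map_one]; ring
  have h1 : natDegree ((1 : Polynomial ℚ) - X) = 1 := by rw [e1, natDegree_neg, natDegree_X_sub_C]
  have e2 : (1 : Polynomial ℚ) - X ^ n = -(X ^ n - C 1) := by rw [map_one]; ring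
  have h2 : natDegree ((1 : Polynomial ℚ) - X ^ n) = n := by
    rw [e2, natDegree_neg, natDegree_X_pow_sub_C]
  have h3 := natDegree_mul (p := (1 : Polynomial ℚ) - X) (q := qIntP n)
    (fun h0 => by rw [h0, natDegree_zero] at h1; omega) (qIntP_ne_zero (by omega))
  rw [qIntP_mul, h2, h1] at h3
  omega

lemma qIntP_irreducible {p : ℕ} (hp : p.Prime) : Irreducible (qIntP p) := by
  haveI := Fact.mk hp
  have : qIntP p = cyclotomic p ℚ := by rw [cyclotomic_prime]; rfl
  rw [this]
  exact cyclotomic.irreducible_rat hp.pos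

lemma prod_Icc_one {M : Type*} [CommMonoid M] (f : ℕ → M) (n : ℕ) :
    ∏ i ∈ Finset.Icc 1 n, f i = ∏ j ∈ Finset.range n, f (j + 1) := by
  rw [← Finset.Ico_add_one_right_eq_Icc, Finset.prod_Ico_eq_prod_range]
  exact Finset.prod_congr (by norm_num) fun j _ => by rw [Nat.add_comm]

local notation "FF" => algebraMap (Polynomial ℚ) (RatFunc ℚ)

/-- For a prime `p` and `1 ≤ k ≤ p-1`:
`binom_q(p−1+k, k) ≡ ([p]_q/[k]_q)(1 + [p]_q ∑_{j=1}^{k-1} q^j/[j]_q) (mod [p]_q³)`. -/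
theorem qbin_p_sub_one_add (p : ℕ) (hp : p.Prime)
    (k : ℕ) (hk1 : 1 ≤ k) (hk : k ≤ p - 1) :
    qCong p 3 (qbin (p - 1 + k) k)
      (qN p / qN k *
        (1 + qN p * ∑ j ∈ Finset.Icc 1 (k - 1), (RatFunc.X : RatFunc ℚ) ^ j / qN j)) := by
  classical
  have hp2 := hp.two_le
  obtain ⟨k', rfl⟩ : ∃ k', k = k' + 1 := ⟨k - 1, by omega⟩
  simp only [Nat.add_sub_cancel] at hk ⊢
  set s : Finset ℕ := Finset.Icc 1 k' with hs
  set P : Polynomial ℚ := qIntP p with hP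
  obtain ⟨c, hc⟩ := prod_add_sq s (fun i => qIntP i) (fun i => X ^ i) P
  set Pa : Polynomial ℚ := ∏ i ∈ s, qIntP i with hPa
  set Sσ : Polynomial ℚ := ∑ j ∈ s, X ^ j * ∏ i ∈ s.erase j, qIntP i with hSσ
  -- coprimality
  have hirr : Irreducible P := qIntP_irreducible hp
  have hprime : Prime P := hirr.prime
  have hnd : ∀ n, 1 ≤ n → n ≤ p - 1 → ¬ P ∣ qIntP n := by
    intro n h1 h2 hdvd
    have hle := natDegree_le_of_dvd hdvd (qIntP_ne_zero (by omega))
    rw [qIntP_natDegree (by omega), qIntP_natDegree h1] at hle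
    omega
  have hcop : IsCoprime (qIntP (k' + 1) * Pa) P := by
    refine ((hirr.coprime_iff_not_dvd).mpr ?_).symm
    intro hdvd
    rcases hprime.dvd_mul.mp hdvd with h | h
    · exact hnd (k' + 1) (by omega) hk h
    · rw [hPa, Prime.dvd_finset_prod_iff hprime] at h
      obtain ⟨i, hi, hdi⟩ := h
      rw [hs, Finset.mem_Icc] at hi
      exact hnd i hi.1 (by omega) hdi
  refine ⟨c, qIntP (k' + 1) * Pa, hcop, ?_⟩
  -- nonzeroness facts
  have hinj : Function.Injective FF := RatFunc.algebraMap_injective ℚ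
  have hFne : ∀ {f : Polynomial ℚ}, f ≠ 0 → FF f ≠ 0 :=
    fun hf h0 => hf (hinj (by rw [h0, map_zero]))
  have hGne : (∏ j ∈ Finset.range (p - 1), ((1 : Polynomial ℚ) - X ^ (j + 1))) ≠ 0 :=
    Finset.prod_ne_zero_iff.mpr fun j _ => one_sub_X_pow_ne_zero (by omega)
  have hQkne : (∏ j ∈ Finset.range (k' + 1), ((1 : Polynomial ℚ) - X ^ (j + 1))) ≠ 0 :=
    Finset.prod_ne_zero_iff.mpr fun j _ => one_sub_X_pow_ne_zero (by omega)
  have hkne : FF (qIntP (k' + 1)) ≠ 0 := hFne (qIntP_ne_zero (by omega))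
  -- polynomial product identities
  have hpeel : ∏ j ∈ Finset.range (k' + 1), (qIntP j + P * X ^ j)
      = P * ∏ i ∈ s, (qIntP i + P * X ^ i) := by
    rw [Finset.prod_range_succ' (fun j => qIntP j + P * X ^ j) k']
    have h0 : qIntP 0 + P * X ^ 0 = P := by simp [qIntP]
    rw [h0, hs, prod_Icc_one, mul_comm]
  have hpeel2 : ∏ j ∈ Finset.range (k' + 1), qIntP (j + 1) = qIntP (k' + 1) * Pa := by
    rw [Finset.prod_range_succ, hPa, hs, prod_Icc_one, mul_comm]
  have keyfac : ∀ j : ℕ, (1 : Polynomial ℚ) - X ^ (p + j) = (1 - X) * (qIntP j + P * X ^ j) := by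
    intro j
    have h1 := qIntP_mul (j + p)
    have h2 := qIntP_add j p
    rw [add_comm p j, ← h1, h2, hP]
    ring
  have hTop : ∏ j ∈ Finset.range (p - 1 + (k' + 1)), ((1 : Polynomial ℚ) - X ^ (j + 1))
      = (∏ j ∈ Finset.range (p - 1), ((1 : Polynomial ℚ) - X ^ (j + 1))) *
        ((1 - X) ^ (k' + 1) * (P * ∏ i ∈ s, (qIntP i + P * X ^ i))) := by
    rw [Finset.prod_range_add]
    congr 1
    calc ∏ j ∈ Finset.range (k' + 1), ((1 : Polynomial ℚ) - X ^ (p - 1 + j + 1))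
        = ∏ j ∈ Finset.range (k' + 1), ((1 - X) * (qIntP j + P * X ^ j)) := by
          refine Finset.prod_congr rfl fun j _ => ?_
          rw [show p - 1 + j + 1 = p + j by omega]
          exact keyfac j
      _ = (1 - X) ^ (k' + 1) * ∏ j ∈ Finset.range (k' + 1), (qIntP j + P * X ^ j) := by
          rw [Finset.prod_mul_distrib, Finset.prod_const, Finset.card_range]
      _ = _ := by rw [hpeel]
  have hQk : ∏ j ∈ Finset.range (k' + 1), ((1 : Polynomial ℚ) - X ^ (j + 1))
      = (1 - X) ^ (k' + 1) * (qIntP (k' + 1) * Pa) := by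
    calc ∏ j ∈ Finset.range (k' + 1), ((1 : Polynomial ℚ) - X ^ (j + 1))
        = ∏ j ∈ Finset.range (k' + 1), ((1 - X) * qIntP (j + 1)) :=
          Finset.prod_congr rfl fun j _ => (qIntP_mul (j + 1)).symm
      _ = (1 - X) ^ (k' + 1) * ∏ j ∈ Finset.range (k' + 1), qIntP (j + 1) := by
          rw [Finset.prod_mul_distrib, Finset.prod_const, Finset.card_range]
      _ = _ := by rw [hpeel2]
  -- Step A: the q-binomial times the denominator
  have hbq : qbin (p - 1 + (k' + 1)) (k' + 1)
      = FF (∏ j ∈ Finset.range (p - 1 + (k' + 1)), ((1 : Polynomial ℚ) - X ^ (j + 1))) /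
        (FF (∏ j ∈ Finset.range (k' + 1), ((1 : Polynomial ℚ) - X ^ (j + 1))) *
         FF (∏ j ∈ Finset.range (p - 1), ((1 : Polynomial ℚ) - X ^ (j + 1)))) := by
    unfold qbin qqPoch
    rw [if_pos (by omega), Nat.add_sub_cancel]
  have hxb : qbin (p - 1 + (k' + 1)) (k' + 1) * FF (qIntP (k' + 1) * Pa)
      = FF (P * ∏ i ∈ s, (qIntP i + P * X ^ i)) := by
    rw [hbq, div_mul_eq_mul_div, div_eq_iff (mul_ne_zero (hFne hQkne) (hFne hGne)),
      ← map_mul, ← map_mul, ← map_mul]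
    exact congrArg _ (by rw [hTop, hQk]; ring)
  -- Step B: the right-hand side times the denominator
  have hSig : (∑ j ∈ s, (RatFunc.X : RatFunc ℚ) ^ j / FF (qIntP j)) * FF Pa = FF Sσ := by
    rw [hSσ, map_sum, Finset.sum_mul]
    refine Finset.sum_congr rfl fun j hj => ?_
    have hj1 : 1 ≤ j := (Finset.mem_Icc.mp (hs ▸ hj)).1
    have hjne : FF (qIntP j) ≠ 0 := hFne (qIntP_ne_zero (by omega))
    have hsplit : Pa = qIntP j * ∏ i ∈ s.erase j, qIntP i := by
      rw [hPa, Finset.mul_prod_erase s _ hj]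
    rw [hsplit, map_mul, map_mul, map_pow, RatFunc.algebraMap_X]
    field_simp
  have hyb : (FF P / FF (qIntP (k' + 1)) *
        (1 + FF P * ∑ j ∈ s, (RatFunc.X : RatFunc ℚ) ^ j / FF (qIntP j))) *
        FF (qIntP (k' + 1) * Pa) = FF (P * (Pa + P * Sσ)) := by
    rw [map_mul]
    have step1 : (FF P / FF (qIntP (k' + 1)) *
        (1 + FF P * ∑ j ∈ s, (RatFunc.X : RatFunc ℚ) ^ j / FF (qIntP j))) *
        (FF (qIntP (k' + 1)) * FF Pa)
        = (FF (qIntP (k' + 1)) / FF (qIntP (k' + 1))) *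
          (FF P * FF Pa + FF P * FF P *
            ((∑ j ∈ s, (RatFunc.X : RatFunc ℚ) ^ j / FF (qIntP j)) * FF Pa)) := by ring
    rw [step1, div_self hkne, one_mul, hSig, map_mul, map_add, map_mul]
    ring
  -- conclusion
  show (qbin (p - 1 + (k' + 1)) (k' + 1) - qN p / qN (k' + 1) *
      (1 + qN p * ∑ j ∈ s, (RatFunc.X : RatFunc ℚ) ^ j / qN j)) * FF (qIntP (k' + 1) * Pa)
      = FF (P ^ 3 * c)
  simp only [qN, ← hP]
  rw [sub_mul, hxb, hyb, ← map_sub]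
  exact congrArg _ (by linear_combination P * hc)
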